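/- Let rings A and B be symmetric separably equivalent with context (P, Q, ν, μ), and identify End(P_B) with the unital ring P ⊗_B Q under the μ-multiplication, so that A embeds by a ↦ Σⱼ a·pⱼ ⊗ qⱼ. Then this ring extension A ↪ P ⊗_B Q is: (i) Frobenius, with Frobenius homomorphism ν: P ⊗_B Q → A (an A-A-bimodule map) and dual bases tensor Σᵢ,ⱼ (pⱼ ⊗ q'ᵢ) ⊗_A (p'ᵢ ⊗ qⱼ), i.e. for every x ∈ P ⊗_B Q one has Σᵢ,ⱼ (pⱼ ⊗ q'ᵢ)·ν((p'ᵢ ⊗ qⱼ)·x) = x = Σᵢ,ⱼ ν(x·(pⱼ ⊗ q'ᵢ))·(p'ᵢ ⊗ qⱼ); (ii) split, i.e. there is an A-A-bimodule map P ⊗_B Q → A restricting to the identity on the image of A; and (iii) separable, i.e. the multiplication map (P ⊗_B Q) ⊗_A (P ⊗_B Q) → P ⊗_B Q splits as a map of (P ⊗_B Q)-(P ⊗_B Q)-bimodules. -/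

import Mathlib

/-! ### A balanced tensor product of a right module and a left module
over a possibly noncommutative ring, constructed as a quotient of the
`ℤ`-tensor product. -/

open MulOpposite
open scoped TensorProduct

section BalCore

variable (R : Type*) [Ring R] (M : Type*) [AddCommGroup M] [Module Rᵐᵒᵖ M]
  (N : Type*) [AddCommGroup N] [Module R N]

/-- The subgroup of relations defining the balanced tensor product. -/
def balRel : Submodule ℤ (TensorProduct ℤ M N) :=
  Submodule.span ℤ {x | ∃ (m : M) (r : R) (n : N), x = (op r • m) ⊗ₜ[ℤ] n - m ⊗ₜ[ℤ] (r • n)}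

/-- The balanced tensor product `M ⊗[R] N` of a right `R`-module `M` and a
left `R`-module `N`. -/
def Bal : Type _ := TensorProduct ℤ M N ⧸ balRel R M N

noncomputable instance : AddCommGroup (Bal R M N) := Submodule.Quotient.addCommGroup _

variable {M N}

/-- The canonical image of `m ⊗ n` in the balanced tensor product. -/
noncomputable def Bal.tmul (m : M) (n : N) : Bal R M N := Submodule.Quotient.mk (m ⊗ₜ[ℤ] n)

theorem Bal.add_tmul (m m' : M) (n : N) :
    Bal.tmul R (m + m') n = Bal.tmul R m n + Bal.tmul R m' n := by
  show Submodule.Quotient.mk _ = _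
  rw [TensorProduct.add_tmul]
  rfl

theorem Bal.tmul_add (m : M) (n n' : N) :
    Bal.tmul R m (n + n') = Bal.tmul R m n + Bal.tmul R m n' := by
  show Submodule.Quotient.mk _ = _
  rw [TensorProduct.tmul_add]
  rfl

theorem Bal.zero_tmul (n : N) : Bal.tmul R (0 : M) n = 0 := by
  show Submodule.Quotient.mk _ = _
  rw [TensorProduct.zero_tmul]
  rfl

theorem Bal.tmul_zero (m : M) : Bal.tmul R m (0 : N) = 0 := by
  show Submodule.Quotient.mk _ = _
  rw [TensorProduct.tmul_zero]
  rfl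

/-- The fundamental balancing relation `(m · r) ⊗ n = m ⊗ (r · n)`. -/
theorem Bal.op_smul_tmul (m : M) (r : R) (n : N) :
    Bal.tmul R (op r • m) n = Bal.tmul R m (r • n) :=
  (Submodule.Quotient.eq _).2 (Submodule.subset_span ⟨m, r, n, rfl⟩)

theorem Bal.induction_on {C : Bal R M N → Prop} (x : Bal R M N) (zero : C 0)
    (tmul : ∀ m n, C (Bal.tmul R m n)) (add : ∀ x y, C x → C y → C (x + y)) : C x := by
  obtain ⟨y, rfl⟩ := Submodule.Quotient.mk_surjective _ x
  induction y using TensorProduct.induction_on with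
  | zero => exact zero
  | tmul m n => exact tmul m n
  | add a b ha hb =>
      have : (Submodule.Quotient.mk (a + b) : Bal R M N)
          = Submodule.Quotient.mk a + Submodule.Quotient.mk b := rfl
      rw [this]; exact add _ _ ha hb

/-- Lift a balanced biadditive map to the balanced tensor product. -/
noncomputable def Bal.liftFun {T : Type*} [AddCommGroup T] (f : M → N → T)
    (h1 : ∀ m m' n, f (m + m') n = f m n + f m' n)
    (h2 : ∀ m n n', f m (n + n') = f m n + f m n')
    (h3 : ∀ (m : M) (r : R) (n : N), f (op r • m) n = f m (r • n)) : Bal R M N →+ T :=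
  letI f₂ : M →+ N →+ T :=
    AddMonoidHom.mk' (fun m => AddMonoidHom.mk' (f m) (h2 m))
      (fun m m' => AddMonoidHom.ext fun n => h1 m m' n)
  letI bil : M →ₗ[ℤ] N →ₗ[ℤ] T :=
    { toFun := fun m => (f₂ m).toIntLinearMap
      map_add' := fun m m' => LinearMap.ext fun n => by simp
      map_smul' := fun z m => LinearMap.ext fun n => by
        simp [map_zsmul] }
  ((balRel R M N).liftQ (TensorProduct.lift bil) (by
    rw [balRel, Submodule.span_le]
    rintro x ⟨m, r, n, rfl⟩
    simp only [SetLike.mem_coe, LinearMap.mem_ker, map_sub]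
    show TensorProduct.lift bil ((op r • m) ⊗ₜ[ℤ] n - m ⊗ₜ[ℤ] (r • n)) = 0
    rw [map_sub, TensorProduct.lift.tmul, TensorProduct.lift.tmul]
    show f (op r • m) n - f m (r • n) = 0
    rw [h3, sub_self])).toAddMonoidHom

@[simp] theorem Bal.liftFun_tmul {T : Type*} [AddCommGroup T] (f : M → N → T)
    (h1 : ∀ m m' n, f (m + m') n = f m n + f m' n)
    (h2 : ∀ m n n', f m (n + n') = f m n + f m n')
    (h3 : ∀ (m : M) (r : R) (n : N), f (op r • m) n = f m (r • n)) (m : M) (n : N) :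
    Bal.liftFun R f h1 h2 h3 (Bal.tmul R m n) = f m n := by
  simp [Bal.liftFun, Bal.tmul, Submodule.Quotient.mk]
  rfl

theorem Bal.addHom_ext {T : Type*} [AddCommGroup T] {f g : Bal R M N →+ T}
    (h : ∀ m n, f (Bal.tmul R m n) = g (Bal.tmul R m n)) : f = g := by
  ext x
  refine Bal.induction_on R (C := fun z => f z = g z) x (by simp) h
    (fun x y hx hy => by simp only [map_add]; rw [hx, hy])

end BalCore
section BalModule

variable (R : Type*) [Ring R] {M : Type*} [AddCommGroup M] [Module Rᵐᵒᵖ M]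
  {N : Type*} [AddCommGroup N] [Module R N]

section Left

variable {S : Type*} [Ring S] [Module S M] [SMulCommClass S Rᵐᵒᵖ M]

/-- The left action on the balanced tensor product through the first factor. -/
noncomputable def Bal.lsmulHom (s : S) : Bal R M N →+ Bal R M N :=
  Bal.liftFun R (fun m n => Bal.tmul R (s • m) n)
    (fun m m' n => by
      show Bal.tmul R (s • (m + m')) n = Bal.tmul R (s • m) n + Bal.tmul R (s • m') n
      rw [smul_add, Bal.add_tmul])
    (fun m n n' => Bal.tmul_add R _ n n')
    (fun m r n => by
      show Bal.tmul R (s • op r • m) n = Bal.tmul R (s • m) (r • n)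
      rw [smul_comm, Bal.op_smul_tmul])

theorem Bal.lsmulHom_tmul (s : S) (m : M) (n : N) :
    Bal.lsmulHom R (M := M) (N := N) s (Bal.tmul R m n) = Bal.tmul R (s • m) n :=
  Bal.liftFun_tmul R _ _ _ _ m n

noncomputable instance : SMul S (Bal R M N) := ⟨fun s x => Bal.lsmulHom R s x⟩

theorem Bal.lsmul_tmul (s : S) (m : M) (n : N) :
    s • Bal.tmul R m n = Bal.tmul R (s • m) n :=
  Bal.lsmulHom_tmul R s m n

theorem Bal.lsmul_one : Bal.lsmulHom R (M := M) (N := N) (1 : S) = AddMonoidHom.id _ :=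
  Bal.addHom_ext R fun m n => by
    rw [Bal.lsmulHom_tmul, one_smul, AddMonoidHom.id_apply]

theorem Bal.lsmul_mul (s t : S) :
    Bal.lsmulHom R (M := M) (N := N) (s * t) = (Bal.lsmulHom R s).comp (Bal.lsmulHom R t) :=
  Bal.addHom_ext R fun m n => by
    rw [AddMonoidHom.comp_apply, Bal.lsmulHom_tmul, Bal.lsmulHom_tmul, Bal.lsmulHom_tmul,
      mul_smul]

theorem Bal.lsmul_addsmul (s t : S) :
    Bal.lsmulHom R (M := M) (N := N) (s + t) = Bal.lsmulHom R s + Bal.lsmulHom R t :=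
  Bal.addHom_ext R fun m n => by
    rw [AddMonoidHom.add_apply, Bal.lsmulHom_tmul, Bal.lsmulHom_tmul, Bal.lsmulHom_tmul,
      add_smul, Bal.add_tmul]

theorem Bal.lsmul_zerosmul : Bal.lsmulHom R (M := M) (N := N) (0 : S) = 0 :=
  Bal.addHom_ext R fun m n => by
    rw [Bal.lsmulHom_tmul, zero_smul, Bal.zero_tmul, AddMonoidHom.zero_apply]

noncomputable instance : Module S (Bal R M N) where
  one_smul x := DFunLike.congr_fun (Bal.lsmul_one R (M := M) (N := N) (S := S)) x
  mul_smul s t x := DFunLike.congr_fun (Bal.lsmul_mul R s t) x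
  smul_zero s := (Bal.lsmulHom R (M := M) (N := N) s).map_zero
  smul_add s x y := (Bal.lsmulHom R s).map_add x y
  add_smul s t x := DFunLike.congr_fun (Bal.lsmul_addsmul R s t) x
  zero_smul x := DFunLike.congr_fun (Bal.lsmul_zerosmul R (M := M) (N := N) (S := S)) x

end Left

section Right

variable {S : Type*} [Ring S] [Module Sᵐᵒᵖ N] [SMulCommClass R Sᵐᵒᵖ N]

/-- The right action on the balanced tensor product through the second factor. -/
noncomputable def Bal.rsmulHom (s : Sᵐᵒᵖ) : Bal R M N →+ Bal R M N :=
  Bal.liftFun R (fun m n => Bal.tmul R m (s • n))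
    (fun m m' n => Bal.add_tmul R m m' _)
    (fun m n n' => by
      show Bal.tmul R m (s • (n + n')) = Bal.tmul R m (s • n) + Bal.tmul R m (s • n')
      rw [smul_add, Bal.tmul_add])
    (fun m r n => by
      show Bal.tmul R (op r • m) (s • n) = Bal.tmul R m (s • r • n)
      rw [Bal.op_smul_tmul, smul_comm])

theorem Bal.rsmulHom_tmul (s : Sᵐᵒᵖ) (m : M) (n : N) :
    Bal.rsmulHom R (M := M) (N := N) s (Bal.tmul R m n) = Bal.tmul R m (s • n) :=
  Bal.liftFun_tmul R _ _ _ _ m n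

noncomputable instance : SMul Sᵐᵒᵖ (Bal R M N) := ⟨fun s x => Bal.rsmulHom R s x⟩

theorem Bal.rsmul_tmul (s : Sᵐᵒᵖ) (m : M) (n : N) :
    s • Bal.tmul R m n = Bal.tmul R m (s • n) :=
  Bal.rsmulHom_tmul R s m n

theorem Bal.rsmul_one : Bal.rsmulHom R (M := M) (N := N) (1 : Sᵐᵒᵖ) = AddMonoidHom.id _ :=
  Bal.addHom_ext R fun m n => by
    rw [Bal.rsmulHom_tmul, one_smul, AddMonoidHom.id_apply]

theorem Bal.rsmul_mul (s t : Sᵐᵒᵖ) :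
    Bal.rsmulHom R (M := M) (N := N) (s * t) = (Bal.rsmulHom R s).comp (Bal.rsmulHom R t) :=
  Bal.addHom_ext R fun m n => by
    rw [AddMonoidHom.comp_apply, Bal.rsmulHom_tmul, Bal.rsmulHom_tmul, Bal.rsmulHom_tmul,
      mul_smul]

theorem Bal.rsmul_addsmul (s t : Sᵐᵒᵖ) :
    Bal.rsmulHom R (M := M) (N := N) (s + t) = Bal.rsmulHom R s + Bal.rsmulHom R t :=
  Bal.addHom_ext R fun m n => by
    rw [AddMonoidHom.add_apply, Bal.rsmulHom_tmul, Bal.rsmulHom_tmul, Bal.rsmulHom_tmul,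
      add_smul, Bal.tmul_add]

theorem Bal.rsmul_zerosmul : Bal.rsmulHom R (M := M) (N := N) (0 : Sᵐᵒᵖ) = 0 :=
  Bal.addHom_ext R fun m n => by
    rw [Bal.rsmulHom_tmul, zero_smul, Bal.tmul_zero, AddMonoidHom.zero_apply]

noncomputable instance : Module Sᵐᵒᵖ (Bal R M N) where
  one_smul x := DFunLike.congr_fun (Bal.rsmul_one R (M := M) (N := N) (S := S)) x
  mul_smul s t x := DFunLike.congr_fun (Bal.rsmul_mul R s t) x
  smul_zero s := (Bal.rsmulHom R (M := M) (N := N) s).map_zero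
  smul_add s x y := (Bal.rsmulHom R s).map_add x y
  add_smul s t x := DFunLike.congr_fun (Bal.rsmul_addsmul R s t) x
  zero_smul x := DFunLike.congr_fun (Bal.rsmul_zerosmul R (M := M) (N := N) (S := S)) x

end Right

end BalModule

section AuxSum

variable (R : Type*) [Ring R] {M : Type*} [AddCommGroup M] [Module Rᵐᵒᵖ M]
  {N : Type*} [AddCommGroup N] [Module R N]

theorem Bal.sum_tmul {ι : Type*} (s : Finset ι) (f : ι → M) (n : N) :
    Bal.tmul R (∑ i ∈ s, f i) n = ∑ i ∈ s, Bal.tmul R (f i) n :=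
  map_sum (AddMonoidHom.mk' (fun m => Bal.tmul R m n) (fun m m' => Bal.add_tmul R m m' n)) f s

theorem Bal.tmul_sum {ι : Type*} (s : Finset ι) (m : M) (f : ι → N) :
    Bal.tmul R m (∑ i ∈ s, f i) = ∑ i ∈ s, Bal.tmul R m (f i) :=
  map_sum (AddMonoidHom.mk' (fun n => Bal.tmul R m n) (fun n n' => Bal.tmul_add R m n n')) f s

end AuxSum

section Chi

variable {A B P Q : Type*} [Ring A] [Ring B]
  [AddCommGroup P] [Module A P] [Module Bᵐᵒᵖ P] [SMulCommClass A Bᵐᵒᵖ P]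
  [AddCommGroup Q] [Module B Q] [Module Aᵐᵒᵖ Q] [SMulCommClass B Aᵐᵒᵖ Q]

/-- Auxiliary map `(q̃, p̃) ↦ (p ⊗ q̃) ⊗[A] (p̃ ⊗ q)` used for the separability element. -/
noncomputable def chiAux (p : P) (q : Q) : Bal A Q P →+ Bal A (Bal B P Q) (Bal B P Q) :=
  Bal.liftFun A (fun qt pt => Bal.tmul A (Bal.tmul B p qt) (Bal.tmul B pt q))
    (fun qt qt' pt => by simp only [Bal.tmul_add, Bal.add_tmul])
    (fun qt pt pt' => by simp only [Bal.add_tmul, Bal.tmul_add])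
    (fun qt a pt => by
      show Bal.tmul A (Bal.tmul B p (op a • qt)) (Bal.tmul B pt q)
          = Bal.tmul A (Bal.tmul B p qt) (Bal.tmul B (a • pt) q)
      rw [← Bal.rsmul_tmul, Bal.op_smul_tmul, Bal.lsmul_tmul])

@[simp] theorem chiAux_tmul (p : P) (q : Q) (qt : Q) (pt : P) :
    chiAux (A := A) (B := B) p q (Bal.tmul A qt pt)
      = Bal.tmul A (Bal.tmul B p qt) (Bal.tmul B pt q) :=
  Bal.liftFun_tmul A _ _ _ _ qt pt

end Chi

/-- For symmetric separably equivalent rings with context `(P,Q,ν,μ)`,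
identifying `End(P_B)` with `P ⊗[B] Q` under the `μ`-multiplication, the ring extension
`A ↪ P ⊗[B] Q`, `a ↦ Σⱼ a·pⱼ ⊗ qⱼ`, is (i) a Frobenius extension with Frobenius
homomorphism `ν` and dual bases tensor `Σᵢⱼ (pⱼ ⊗ q'ᵢ) ⊗[A] (p'ᵢ ⊗ qⱼ)`, (ii) split, and
(iii) separable. -/
theorem extension_is_split_separable_frobenius
    {A B P Q : Type*} [Ring A] [Ring B]
    [AddCommGroup P] [Module A P] [Module Bᵐᵒᵖ P] [SMulCommClass A Bᵐᵒᵖ P]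
    [AddCommGroup Q] [Module B Q] [Module Aᵐᵒᵖ Q] [SMulCommClass B Aᵐᵒᵖ Q]
    [Module.Finite A P] [Module.Projective A P]
    [Module.Finite Bᵐᵒᵖ P] [Module.Projective Bᵐᵒᵖ P]
    [Module.Finite B Q] [Module.Projective B Q]
    [Module.Finite Aᵐᵒᵖ Q] [Module.Projective Aᵐᵒᵖ Q]
    (ν : Bal B P Q →+ A)
    (hνl : ∀ (a : A) (x : Bal B P Q), ν (a • x) = a * ν x)
    (hνr : ∀ (a : A) (x : Bal B P Q), ν (op a • x) = ν x * a)
    (hνsurj : Function.Surjective ν)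
    (hνsplit : ∃ σ : A →+ Bal B P Q,
      (∀ (a c : A), σ (a * c) = a • σ c) ∧ (∀ (a c : A), σ (c * a) = op a • σ c) ∧
      ∀ a : A, ν (σ a) = a)
    (μ : Bal A Q P →+ B)
    (hμl : ∀ (b : B) (y : Bal A Q P), μ (b • y) = b * μ y)
    (hμr : ∀ (b : B) (y : Bal A Q P), μ (op b • y) = μ y * b)
    (hμsurj : Function.Surjective μ)
    (hμsplit : ∃ τ : B →+ Bal A Q P,
      (∀ (b c : B), τ (b * c) = b • τ c) ∧ (∀ (b c : B), τ (c * b) = op b • τ c) ∧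
      ∀ b : B, μ (τ b) = b)
    (n : ℕ) (q' : Fin n → Q) (p' : Fin n → P)
    (adj1 : ∀ p : P, ∑ i, ν (Bal.tmul B p (q' i)) • p' i = p)
    (adj2 : ∀ q : Q, ∑ i, op (ν (Bal.tmul B (p' i) q)) • q' i = q)
    (k : ℕ) (pj : Fin k → P) (qj : Fin k → Q)
    (adj3 : ∀ q : Q, ∑ j, μ (Bal.tmul A q (pj j)) • qj j = q)
    (adj4 : ∀ p : P, ∑ j, op (μ (Bal.tmul A (qj j) p)) • pj j = p)
    :
    ∀ mul : Bal B P Q → Bal B P Q → Bal B P Q,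
      (∀ x y z : Bal B P Q, mul (x + y) z = mul x z + mul y z) →
      (∀ x y z : Bal B P Q, mul x (y + z) = mul x y + mul x z) →
      (∀ (p p' : P) (q q'' : Q),
        mul (Bal.tmul B p q) (Bal.tmul B p' q'')
          = Bal.tmul B (op (μ (Bal.tmul A q p')) • p) q'') →
    ∀ emb : A → Bal B P Q,
      (∀ a : A, emb a = ∑ j, Bal.tmul B (a • pj j) (qj j)) →
      -- (i) Frobenius: `ν` is an `A`-`A`-bimodule map for the extension structure, with
      -- dual bases tensor `Σᵢⱼ (pⱼ ⊗ q'ᵢ) ⊗[A] (p'ᵢ ⊗ qⱼ)`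
      (((∀ (a : A) (x : Bal B P Q), ν (mul (emb a) x) = a * ν x) ∧
        (∀ (a : A) (x : Bal B P Q), ν (mul x (emb a)) = ν x * a) ∧
        (∀ x : Bal B P Q,
          (∑ i, ∑ j,
            mul (Bal.tmul B (pj j) (q' i)) (emb (ν (mul (Bal.tmul B (p' i) (qj j)) x)))) = x ∧
          (∑ i, ∑ j,
            mul (emb (ν (mul x (Bal.tmul B (pj j) (q' i))))) (Bal.tmul B (p' i) (qj j))) = x)) ∧
      -- (ii) split: an `A`-`A`-bimodule retraction of the embedding
      (∃ E : Bal B P Q →+ A,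
        (∀ (a : A) (x : Bal B P Q), E (mul (emb a) x) = a * E x) ∧
        (∀ (a : A) (x : Bal B P Q), E (mul x (emb a)) = E x * a) ∧
        ∀ a : A, E (emb a) = a) ∧
      -- (iii) separable: the multiplication map `(P ⊗[B] Q) ⊗[A] (P ⊗[B] Q) → P ⊗[B] Q`
      -- splits as a map of `(P ⊗[B] Q)`-`(P ⊗[B] Q)`-bimodules
      (∃ (mmul : Bal A (Bal B P Q) (Bal B P Q) →+ Bal B P Q)
         (L R : Bal B P Q → Bal A (Bal B P Q) (Bal B P Q) →+ Bal A (Bal B P Q) (Bal B P Q)),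
        (∀ x y : Bal B P Q, mmul (Bal.tmul A x y) = mul x y) ∧
        (∀ t x y : Bal B P Q, L t (Bal.tmul A x y) = Bal.tmul A (mul t x) y) ∧
        (∀ t x y : Bal B P Q, R t (Bal.tmul A x y) = Bal.tmul A x (mul y t)) ∧
        ∃ s : Bal B P Q →+ Bal A (Bal B P Q) (Bal B P Q),
          (∀ t : Bal B P Q, mmul (s t) = t) ∧
          (∀ t t' : Bal B P Q, s (mul t t') = L t (s t')) ∧
          (∀ t t' : Bal B P Q, s (mul t t') = R t' (s t)))) := by
  intro mul addl addr hmul emb hemb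
  -- zero laws
  have h0l : ∀ x, mul 0 x = 0 := fun x => by
    have h := addl 0 0 x
    rw [add_zero] at h
    exact left_eq_add.mp h
  have h0r : ∀ x, mul x 0 = 0 := fun x => by
    have h := addr x 0 0
    rw [add_zero] at h
    exact left_eq_add.mp h
  -- sums
  have hsumL : ∀ {ι : Type} (s : Finset ι) (f : ι → Bal B P Q) (y : Bal B P Q),
      mul (∑ i ∈ s, f i) y = ∑ i ∈ s, mul (f i) y := fun s f y =>
    map_sum (AddMonoidHom.mk' (fun x => mul x y) (fun a b => addl a b y)) f s
  have hsumR : ∀ {ι : Type} (s : Finset ι) (x : Bal B P Q) (f : ι → Bal B P Q),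
      mul x (∑ i ∈ s, f i) = ∑ i ∈ s, mul x (f i) := fun s x f =>
    map_sum (AddMonoidHom.mk' (fun y => mul x y) (fun a b => addr x a b)) f s
  -- compatibility with scalars
  have hsmull : ∀ (a : A) (x y : Bal B P Q), mul (a • x) y = a • mul x y := by
    intro a x y
    induction x using Bal.induction_on with
    | zero => rw [smul_zero, h0l, smul_zero]
    | tmul p q =>
      induction y using Bal.induction_on with
      | zero => rw [h0r, h0r, smul_zero]
      | tmul p₁ q₁ =>
        rw [Bal.lsmul_tmul, hmul, hmul, Bal.lsmul_tmul, smul_comm a]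
      | add u v hu hv => rw [addr, addr, hu, hv, smul_add]
    | add u v hu hv => rw [smul_add, addl, addl, hu, hv, smul_add]
  have hopr : ∀ (a : A) (x y : Bal B P Q), mul x (op a • y) = op a • mul x y := by
    intro a x y
    induction y using Bal.induction_on with
    | zero => rw [smul_zero, h0r, smul_zero]
    | tmul p₁ q₁ =>
      induction x using Bal.induction_on with
      | zero => rw [h0l, h0l, smul_zero]
      | tmul p q =>
        rw [Bal.rsmul_tmul, hmul, hmul, Bal.rsmul_tmul]
      | add u v hu hv => rw [addl, addl, hu, hv, smul_add]
    | add u v hu hv => rw [smul_add, addr, addr, hu, hv, smul_add]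
  have hmid : ∀ (a : A) (x y : Bal B P Q), mul (op a • x) y = mul x (a • y) := by
    intro a x y
    induction x using Bal.induction_on with
    | zero => rw [smul_zero, h0l, h0l]
    | tmul p q =>
      induction y using Bal.induction_on with
      | zero => rw [smul_zero, h0r, h0r]
      | tmul p₁ q₁ =>
        rw [Bal.rsmul_tmul, Bal.lsmul_tmul, hmul, hmul, Bal.op_smul_tmul A q a p₁]
      | add u v hu hv => rw [smul_add, addr, addr, hu, hv]
    | add u v hu hv => rw [smul_add, addl, addl, hu, hv]
  -- associativity
  have hassoc : ∀ x y z, mul (mul x y) z = mul x (mul y z) := by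
    intro x y z
    induction x using Bal.induction_on with
    | zero => rw [h0l, h0l, h0l]
    | tmul p q =>
      induction y using Bal.induction_on with
      | zero => rw [h0r, h0l, h0r]
      | tmul p₁ q₁ =>
        induction z using Bal.induction_on with
        | zero => rw [h0r, h0r, h0r]
        | tmul p₂ q₂ =>
          rw [hmul, hmul, hmul, hmul, ← Bal.rsmul_tmul, hμr, op_mul, mul_smul]
        | add u v hu hv => rw [addr, addr, addr, hu, hv]
      | add u v hu hv =>
        rw [addr, addl, addl, addr, hu, hv]
    | add u v hu hv => rw [addl, addl, addl, hu, hv]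
  -- the embedding laws
  have hembl : ∀ (a : A) (x : Bal B P Q), mul (emb a) x = a • x := by
    intro a x
    induction x using Bal.induction_on with
    | zero => rw [h0r, smul_zero]
    | tmul p q =>
      rw [hemb, hsumL]
      have e : ∀ j : Fin k, mul (Bal.tmul B (a • pj j) (qj j)) (Bal.tmul B p q)
          = Bal.tmul B (a • op (μ (Bal.tmul A (qj j) p)) • pj j) q := by
        intro j; rw [hmul, smul_comm a]
      rw [Finset.sum_congr rfl fun j _ => e j, ← Bal.sum_tmul, ← Finset.smul_sum, adj4,
        Bal.lsmul_tmul]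
    | add u v hu hv => rw [addr, hu, hv, smul_add]
  have hembr : ∀ (a : A) (x : Bal B P Q), mul x (emb a) = op a • x := by
    intro a x
    induction x using Bal.induction_on with
    | zero => rw [h0l, smul_zero]
    | tmul p q =>
      rw [hemb, hsumR]
      have e : ∀ j : Fin k, mul (Bal.tmul B p q) (Bal.tmul B (a • pj j) (qj j))
          = Bal.tmul B p (μ (Bal.tmul A (op a • q) (pj j)) • qj j) := by
        intro j; rw [hmul, ← Bal.op_smul_tmul, Bal.op_smul_tmul]
      rw [Finset.sum_congr rfl fun j _ => e j, ← Bal.tmul_sum, adj3 (op a • q),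
        ← Bal.rsmul_tmul]
    | add u v hu hv => rw [addl, hu, hv, smul_add]
  -- dual bases identities
  have D1 : ∀ x : Bal B P Q,
      (∑ i, ∑ j, op (ν (mul (Bal.tmul B (p' i) (qj j)) x)) • Bal.tmul B (pj j) (q' i)) = x := by
    intro x
    induction x using Bal.induction_on with
    | zero =>
      have e : ∀ (i : Fin n) (j : Fin k),
          op (ν (mul (Bal.tmul B (p' i) (qj j)) (0 : Bal B P Q))) • Bal.tmul B (pj j) (q' i)
            = 0 := by
        intro i j; rw [h0r, map_zero, op_zero, zero_smul]
      rw [Finset.sum_congr rfl fun i _ => Finset.sum_congr rfl fun j _ => e i j]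
      simp
    | tmul p q =>
      have e : ∀ (i : Fin n) (j : Fin k),
          op (ν (mul (Bal.tmul B (p' i) (qj j)) (Bal.tmul B p q))) • Bal.tmul B (pj j) (q' i)
            = Bal.tmul B (pj j)
                (op (ν (Bal.tmul B (p' i) (μ (Bal.tmul A (qj j) p) • q))) • q' i) := by
        intro i j; rw [hmul, Bal.op_smul_tmul, Bal.rsmul_tmul]
      rw [Finset.sum_congr rfl fun i _ => Finset.sum_congr rfl fun j _ => e i j, Finset.sum_comm]
      have e2 : ∀ j : Fin k,
          (∑ i, Bal.tmul B (pj j)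
              (op (ν (Bal.tmul B (p' i) (μ (Bal.tmul A (qj j) p) • q))) • q' i))
            = Bal.tmul B (op (μ (Bal.tmul A (qj j) p)) • pj j) q := by
        intro j
        rw [← Bal.tmul_sum, adj2 (μ (Bal.tmul A (qj j) p) • q), ← Bal.op_smul_tmul]
      rw [Finset.sum_congr rfl fun j _ => e2 j, ← Bal.sum_tmul, adj4]
    | add u v hu hv =>
      have e : ∀ (i : Fin n) (j : Fin k),
          op (ν (mul (Bal.tmul B (p' i) (qj j)) (u + v))) • Bal.tmul B (pj j) (q' i)
            = op (ν (mul (Bal.tmul B (p' i) (qj j)) u)) • Bal.tmul B (pj j) (q' i)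
              + op (ν (mul (Bal.tmul B (p' i) (qj j)) v)) • Bal.tmul B (pj j) (q' i) := by
        intro i j; rw [addr, map_add, MulOpposite.op_add, add_smul]
      rw [Finset.sum_congr rfl fun i _ => Finset.sum_congr rfl fun j _ => e i j]
      simp only [Finset.sum_add_distrib]
      rw [hu, hv]
  have D2 : ∀ x : Bal B P Q,
      (∑ i, ∑ j, (ν (mul x (Bal.tmul B (pj j) (q' i)))) • Bal.tmul B (p' i) (qj j)) = x := by
    intro x
    induction x using Bal.induction_on with
    | zero =>
      have e : ∀ (i : Fin n) (j : Fin k),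
          (ν (mul (0 : Bal B P Q) (Bal.tmul B (pj j) (q' i)))) • Bal.tmul B (p' i) (qj j)
            = 0 := by
        intro i j; rw [h0l, map_zero, zero_smul]
      rw [Finset.sum_congr rfl fun i _ => Finset.sum_congr rfl fun j _ => e i j]
      simp
    | tmul p q =>
      have e : ∀ (i : Fin n) (j : Fin k),
          (ν (mul (Bal.tmul B p q) (Bal.tmul B (pj j) (q' i)))) • Bal.tmul B (p' i) (qj j)
            = Bal.tmul B
                (ν (Bal.tmul B (op (μ (Bal.tmul A q (pj j))) • p) (q' i)) • p' i) (qj j) := by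
        intro i j; rw [hmul, Bal.lsmul_tmul]
      rw [Finset.sum_congr rfl fun i _ => Finset.sum_congr rfl fun j _ => e i j, Finset.sum_comm]
      have e2 : ∀ j : Fin k,
          (∑ i, Bal.tmul B
              (ν (Bal.tmul B (op (μ (Bal.tmul A q (pj j))) • p) (q' i)) • p' i) (qj j))
            = Bal.tmul B p (μ (Bal.tmul A q (pj j)) • qj j) := by
        intro j
        rw [← Bal.sum_tmul, adj1 (op (μ (Bal.tmul A q (pj j))) • p), Bal.op_smul_tmul]
      rw [Finset.sum_congr rfl fun j _ => e2 j, ← Bal.tmul_sum, adj3 q]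
    | add u v hu hv =>
      have e : ∀ (i : Fin n) (j : Fin k),
          (ν (mul (u + v) (Bal.tmul B (pj j) (q' i)))) • Bal.tmul B (p' i) (qj j)
            = (ν (mul u (Bal.tmul B (pj j) (q' i)))) • Bal.tmul B (p' i) (qj j)
              + (ν (mul v (Bal.tmul B (pj j) (q' i)))) • Bal.tmul B (p' i) (qj j) := by
        intro i j; rw [addl, map_add, add_smul]
      rw [Finset.sum_congr rfl fun i _ => Finset.sum_congr rfl fun j _ => e i j]
      simp only [Finset.sum_add_distrib]
      rw [hu, hv]
  refine ⟨⟨fun a x => by rw [hembl, hνl], fun a x => by rw [hembr, hνr], ?_⟩, ?_, ?_⟩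
  · -- dual bases
    intro x
    constructor
    · have e : ∀ (i : Fin n) (j : Fin k),
          mul (Bal.tmul B (pj j) (q' i)) (emb (ν (mul (Bal.tmul B (p' i) (qj j)) x)))
            = op (ν (mul (Bal.tmul B (p' i) (qj j)) x)) • Bal.tmul B (pj j) (q' i) :=
        fun i j => hembr _ _
      rw [Finset.sum_congr rfl fun i _ => Finset.sum_congr rfl fun j _ => e i j]
      exact D1 x
    · have e : ∀ (i : Fin n) (j : Fin k),
          mul (emb (ν (mul x (Bal.tmul B (pj j) (q' i))))) (Bal.tmul B (p' i) (qj j))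
            = (ν (mul x (Bal.tmul B (pj j) (q' i)))) • Bal.tmul B (p' i) (qj j) :=
        fun i j => hembl _ _
      rw [Finset.sum_congr rfl fun i _ => Finset.sum_congr rfl fun j _ => e i j]
      exact D2 x
  · -- split
    obtain ⟨σ, hσl, hσr, hσν⟩ := hνsplit
    have hσa : ∀ a : A, a • σ 1 = op a • σ 1 := by
      intro a; rw [← hσl a 1, ← hσr a 1, mul_one, one_mul]
    refine ⟨AddMonoidHom.mk' (fun x => ν (mul x (σ 1))) (fun x y => by
      show ν (mul (x + y) (σ 1)) = ν (mul x (σ 1)) + ν (mul y (σ 1))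
      rw [addl, map_add]), ?_, ?_, ?_⟩
    · intro a x
      show ν (mul (mul (emb a) x) (σ 1)) = a * ν (mul x (σ 1))
      rw [hembl, hsmull, hνl]
    · intro a x
      show ν (mul (mul x (emb a)) (σ 1)) = ν (mul x (σ 1)) * a
      rw [hembr, hmid, hσa, hopr, hνr]
    · intro a
      show ν (mul (emb a) (σ 1)) = a
      rw [hembl, hνl, hσν, mul_one]
  · -- separable
    obtain ⟨τ, hτl, hτr, hτμ⟩ := hμsplit
    have hcent : ∀ b : B, b • τ 1 = op b • τ 1 := by
      intro b; rw [← hτl b 1, ← hτr b 1, mul_one, one_mul]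
    -- lemmas about chiAux
    have χb1 : ∀ (p : P) (b : B) (q : Q),
        chiAux (A := A) (B := B) (op b • p) q = (chiAux p q).comp (Bal.lsmulHom A b) := by
      intro p b q
      refine Bal.addHom_ext A fun qt pt => ?_
      rw [chiAux_tmul, AddMonoidHom.comp_apply, Bal.lsmulHom_tmul, chiAux_tmul,
        Bal.op_smul_tmul]
    have χb2 : ∀ (p : P) (b : B) (q : Q),
        chiAux (A := A) (B := B) p (b • q) = (chiAux p q).comp (Bal.rsmulHom A (op b)) := by
      intro p b q
      refine Bal.addHom_ext A fun qt pt => ?_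
      rw [chiAux_tmul, AddMonoidHom.comp_apply, Bal.rsmulHom_tmul, chiAux_tmul,
        ← Bal.op_smul_tmul]
    have χa1 : ∀ (p₁ p₂ : P) (q : Q) (y : Bal A Q P),
        chiAux (A := A) (B := B) (p₁ + p₂) q y = chiAux p₁ q y + chiAux p₂ q y := by
      intro p₁ p₂ q y
      have h : chiAux (A := A) (B := B) (p₁ + p₂) q = chiAux p₁ q + chiAux p₂ q := by
        refine Bal.addHom_ext A fun qt pt => ?_
        rw [AddMonoidHom.add_apply, chiAux_tmul, chiAux_tmul, chiAux_tmul, Bal.add_tmul,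
          Bal.add_tmul]
      rw [h, AddMonoidHom.add_apply]
    have χa2 : ∀ (p : P) (q₁ q₂ : Q) (y : Bal A Q P),
        chiAux (A := A) (B := B) p (q₁ + q₂) y = chiAux p q₁ y + chiAux p q₂ y := by
      intro p q₁ q₂ y
      have h : chiAux (A := A) (B := B) p (q₁ + q₂) = chiAux p q₁ + chiAux p q₂ := by
        refine Bal.addHom_ext A fun qt pt => ?_
        rw [AddMonoidHom.add_apply, chiAux_tmul, chiAux_tmul, chiAux_tmul, Bal.tmul_add,
          Bal.tmul_add]
      rw [h, AddMonoidHom.add_apply]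
    have χbal : ∀ (p : P) (b : B) (q : Q),
        chiAux (A := A) (B := B) (op b • p) q (τ 1) = chiAux p (b • q) (τ 1) := by
      intro p b q
      rw [χb1, χb2, AddMonoidHom.comp_apply, AddMonoidHom.comp_apply]
      show chiAux (A := A) (B := B) p q (b • τ 1) = chiAux p q (op b • τ 1)
      rw [hcent]
    -- the maps
    set mmulH : Bal A (Bal B P Q) (Bal B P Q) →+ Bal B P Q :=
      Bal.liftFun A mul addl addr (fun x a y => hmid a x y) with hMdef
    set LH : Bal B P Q → (Bal A (Bal B P Q) (Bal B P Q) →+ Bal A (Bal B P Q) (Bal B P Q)) :=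
      fun t => Bal.liftFun A (fun x y => Bal.tmul A (mul t x) y)
        (fun x x' y => by
          show Bal.tmul A (mul t (x + x')) y = Bal.tmul A (mul t x) y + Bal.tmul A (mul t x') y
          rw [addr, Bal.add_tmul])
        (fun x y y' => by
          show Bal.tmul A (mul t x) (y + y')
              = Bal.tmul A (mul t x) y + Bal.tmul A (mul t x) y'
          rw [Bal.tmul_add])
        (fun x a y => by
          show Bal.tmul A (mul t (op a • x)) y = Bal.tmul A (mul t x) (a • y)
          rw [hopr, Bal.op_smul_tmul]) with hLdef
    set RH : Bal B P Q → (Bal A (Bal B P Q) (Bal B P Q) →+ Bal A (Bal B P Q) (Bal B P Q)) :=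
      fun t => Bal.liftFun A (fun x y => Bal.tmul A x (mul y t))
        (fun x x' y => by
          show Bal.tmul A (x + x') (mul y t) = Bal.tmul A x (mul y t) + Bal.tmul A x' (mul y t)
          rw [Bal.add_tmul])
        (fun x y y' => by
          show Bal.tmul A x (mul (y + y') t)
              = Bal.tmul A x (mul y t) + Bal.tmul A x (mul y' t)
          rw [addl, Bal.tmul_add])
        (fun x a y => by
          show Bal.tmul A (op a • x) (mul y t) = Bal.tmul A x (mul (a • y) t)
          rw [Bal.op_smul_tmul, hsmull]) with hRdef
    set sH : Bal B P Q →+ Bal A (Bal B P Q) (Bal B P Q) :=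
      Bal.liftFun B (fun p q => chiAux (A := A) (B := B) p q (τ 1))
        (fun p₁ p₂ q => χa1 p₁ p₂ q (τ 1))
        (fun p q₁ q₂ => χa2 p q₁ q₂ (τ 1))
        (fun p b q => χbal p b q) with hsdef
    have hM : ∀ x y : Bal B P Q, mmulH (Bal.tmul A x y) = mul x y := by
      intro x y; rw [hMdef]; exact Bal.liftFun_tmul A _ _ _ _ x y
    have hL : ∀ t x y : Bal B P Q, LH t (Bal.tmul A x y) = Bal.tmul A (mul t x) y := by
      intro t x y; rw [hLdef]; exact Bal.liftFun_tmul A _ _ _ _ x y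
    have hR : ∀ t x y : Bal B P Q, RH t (Bal.tmul A x y) = Bal.tmul A x (mul y t) := by
      intro t x y; rw [hRdef]; exact Bal.liftFun_tmul A _ _ _ _ x y
    have hS : ∀ (p : P) (q : Q), sH (Bal.tmul B p q) = chiAux (A := A) (B := B) p q (τ 1) := by
      intro p q; rw [hsdef]; exact Bal.liftFun_tmul B _ _ _ _ p q
    have hLadd : ∀ (t₁ t₂ : Bal B P Q) (x), LH (t₁ + t₂) x = LH t₁ x + LH t₂ x := by
      intro t₁ t₂ x
      have h : LH (t₁ + t₂) = LH t₁ + LH t₂ := by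
        refine Bal.addHom_ext A fun u v => ?_
        rw [AddMonoidHom.add_apply, hL, hL, hL, addl, Bal.add_tmul]
      rw [h, AddMonoidHom.add_apply]
    have hL0 : ∀ x, LH 0 x = 0 := by
      intro x
      have h : LH 0 = 0 := by
        refine Bal.addHom_ext A fun u v => ?_
        rw [hL, h0l, Bal.zero_tmul, AddMonoidHom.zero_apply]
      rw [h]; rfl
    have hRadd : ∀ (t₁ t₂ : Bal B P Q) (x), RH (t₁ + t₂) x = RH t₁ x + RH t₂ x := by
      intro t₁ t₂ x
      have h : RH (t₁ + t₂) = RH t₁ + RH t₂ := by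
        refine Bal.addHom_ext A fun u v => ?_
        rw [AddMonoidHom.add_apply, hR, hR, hR, addr, Bal.tmul_add]
      rw [h, AddMonoidHom.add_apply]
    have hR0 : ∀ x, RH 0 x = 0 := by
      intro x
      have h : RH 0 = 0 := by
        refine Bal.addHom_ext A fun u v => ?_
        rw [hR, h0r, Bal.tmul_zero, AddMonoidHom.zero_apply]
      rw [h]; rfl
    refine ⟨mmulH, LH, RH, hM, hL, hR, sH, ?_, ?_, ?_⟩
    · -- retraction
      intro t
      induction t using Bal.induction_on with
      | zero => rw [map_zero, map_zero]
      | tmul p q =>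
        rw [hS]
        have key : ∀ y : Bal A Q P,
            mmulH (chiAux (A := A) (B := B) p q y) = Bal.tmul B (op (μ y) • p) q := by
          intro y
          induction y using Bal.induction_on with
          | zero => rw [map_zero, map_zero, map_zero, op_zero, zero_smul, Bal.zero_tmul]
          | tmul qt pt => rw [chiAux_tmul, hM, hmul]
          | add u v hu hv =>
            rw [map_add, map_add, hu, hv, map_add, MulOpposite.op_add, add_smul,
              Bal.add_tmul]
        rw [key (τ 1), hτμ, op_one, one_smul]
      | add u v hu hv => rw [map_add, map_add, hu, hv]
    · -- left module map
      intro t t'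
      induction t using Bal.induction_on with
      | zero => rw [h0l, map_zero, hL0]
      | tmul p q =>
        induction t' using Bal.induction_on with
        | zero => rw [h0r, map_zero]; exact (map_zero _).symm
        | tmul p₁ q₁ =>
          rw [hmul, hS, hS]
          have h : (LH (Bal.tmul B p q)).comp (chiAux (A := A) (B := B) p₁ q₁)
              = chiAux (op (μ (Bal.tmul A q p₁)) • p) q₁ := by
            refine Bal.addHom_ext A fun qt pt => ?_
            rw [AddMonoidHom.comp_apply, chiAux_tmul, hL, hmul, chiAux_tmul]
          exact (DFunLike.congr_fun h (τ 1)).symm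
        | add u v hu hv => rw [addr, map_add, map_add, map_add, hu, hv]
      | add u v hu hv => rw [addl, map_add, hu, hv, hLadd]
    · -- right module map
      intro t t'
      induction t using Bal.induction_on with
      | zero => rw [h0l, map_zero]; exact (map_zero _).symm
      | tmul p q =>
        induction t' using Bal.induction_on with
        | zero => rw [h0r, map_zero, hR0]
        | tmul p₁ q₁ =>
          rw [hmul, hS, hS]
          have h : (RH (Bal.tmul B p₁ q₁)).comp (chiAux (A := A) (B := B) p q)
              = (chiAux p q₁).comp (Bal.rsmulHom A (op (μ (Bal.tmul A q p₁)))) := by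
            refine Bal.addHom_ext A fun qt pt => ?_
            rw [AddMonoidHom.comp_apply, AddMonoidHom.comp_apply, chiAux_tmul, hR, hmul,
              Bal.rsmulHom_tmul, chiAux_tmul]
          have e1 : chiAux (A := A) (B := B) (op (μ (Bal.tmul A q p₁)) • p) q₁ (τ 1)
              = chiAux p q₁ ((μ (Bal.tmul A q p₁)) • τ 1) :=
            DFunLike.congr_fun (χb1 p _ q₁) (τ 1)
          have e2 : RH (Bal.tmul B p₁ q₁) (chiAux (A := A) (B := B) p q (τ 1))
              = chiAux p q₁ (op (μ (Bal.tmul A q p₁)) • τ 1) :=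
            DFunLike.congr_fun h (τ 1)
          rw [e1, hcent, ← e2]
        | add u v hu hv => rw [addr, map_add, hu, hv, hRadd]
      | add u v hu hv => rw [addl, map_add, map_add, map_add, hu, hv]
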